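/- arXiv:2302.00350 — 2 statements merged into one kernel-verified Lean document; each statement's English description precedes it below -/
import Mathlib

section
/- Let m, n ≥ 2 be integers and let b₂, …, b_m and c₂, …, c_n be complex numbers with c₂ ≠ 0. In the polynomial ring ℂ[X, Y, Z], let I be the ideal generated by g₁ = Y − ∑_{i=2}^{m} bᵢ Xⁱ and g₂ = Z² + ∑_{i=2}^{n} cᵢ Xⁱ, and let J be the ideal generated by Y and Z² + c₂ X². Then for every p ∈ I and every natural number d, if the homogeneous component of p vanishes in every degree strictly less than d, then the homogeneous component of p of degree d lies in J. (Consequently the ideal of initial forms of I — the tangent cone ideal at the origin of the curve {g₁ = g₂ = 0} — equals J, so this curve has an ordinary double point at the origin.) -/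
open MvPolynomial

namespace TangentConeAux

noncomputable section

abbrev MvP := MvPolynomial (Fin 3) ℂ

/-- `Ord t q` means every monomial of `q` has total degree `≥ t`. -/
def Ord (t : ℕ) (q : MvP) : Prop :=
  ∀ u : Fin 3 →₀ ℕ, u.degree < t → MvPolynomial.coeff u q = 0

lemma dg_add (u v : Fin 3 →₀ ℕ) : (u + v).degree = u.degree + v.degree := by
  simp only [Finsupp.degree_eq_weight_one]
  exact map_add _ u v

lemma dg_single (i : Fin 3) (k : ℕ) : (Finsupp.single i k).degree = k := by
  classical
  by_cases h : k = 0
  · simp [h]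
  · exact Finsupp.degree_single i k

lemma ord_iff {t : ℕ} {q : MvP} :
    Ord t q ↔ ∀ e < t, homogeneousComponent e q = 0 := by
  constructor
  · intro h e he
    ext u
    rw [coeff_homogeneousComponent, coeff_zero]
    split_ifs with hu
    · exact h u (hu ▸ he)
    · rfl
  · intro h u hu
    have h2 := congrArg (coeff u) (h u.degree hu)
    rwa [coeff_homogeneousComponent, if_pos rfl, coeff_zero] at h2

lemma ord_zero (t : ℕ) : Ord t (0 : MvP) := fun u _ => coeff_zero u

lemma ord_bot (q : MvP) : Ord 0 q := fun u hu => absurd hu (Nat.not_lt_zero _)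

lemma Ord.mono {s t : ℕ} {q : MvP} (hst : s ≤ t) (h : Ord t q) : Ord s q :=
  fun u hu => h u (lt_of_lt_of_le hu hst)

lemma Ord.add {t : ℕ} {a b : MvP} (ha : Ord t a) (hb : Ord t b) : Ord t (a + b) :=
  fun u hu => by rw [coeff_add, ha u hu, hb u hu, add_zero]

lemma Ord.sum {ι : Type*} {t : ℕ} {s : Finset ι} {f : ι → MvP}
    (h : ∀ i ∈ s, Ord t (f i)) : Ord t (∑ i ∈ s, f i) :=
  fun u hu => by
    rw [coeff_sum]
    exact Finset.sum_eq_zero fun i hi => h i hi u hu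

lemma Ord.mul {s t : ℕ} {a b : MvP} (ha : Ord s a) (hb : Ord t b) :
    Ord (s + t) (a * b) := by
  classical
  intro u hu
  rw [coeff_mul]
  apply Finset.sum_eq_zero
  rintro ⟨v, w⟩ hvw
  have hvwu : v + w = u := Finset.HasAntidiagonal.mem_antidiagonal.mp hvw
  have hd : v.degree + w.degree < s + t := by
    rw [← dg_add, hvwu]; exact hu
  rcases lt_or_ge v.degree s with h1 | h1
  · rw [ha v h1, zero_mul]
  · rw [hb w (by omega), mul_zero]

lemma Ord.pow {a : MvP} (ha : Ord 1 a) (k : ℕ) : Ord k (a ^ k) := by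
  induction k with
  | zero => exact ord_bot _
  | succ k ih => rw [pow_succ]; exact Ord.mul ih ha

lemma Ord.C_mul {t : ℕ} {q : MvP} (a : ℂ) (h : Ord t q) : Ord t (C a * q) :=
  fun u hu => by rw [coeff_C_mul, h u hu, mul_zero]

lemma ord_X (i : Fin 3) : Ord 1 (X i : MvP) := by
  intro u hu
  have hu0 : u = 0 := Finsupp.degree_eq_zero_iff u |>.mp (by omega)
  classical
  rw [hu0, coeff_X', if_neg]
  intro h
  have := congrFun (congrArg DFunLike.coe h) i
  simp at this

lemma ord_X_pow (i : Fin 3) (k : ℕ) : Ord k ((X i : MvP) ^ k) :=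
  Ord.pow (ord_X i) k

lemma Ord.prod {ι : Type*} (s : Finset ι) (g : ι → ℕ) (f : ι → MvP)
    (h : ∀ i ∈ s, Ord (g i) (f i)) : Ord (∑ i ∈ s, g i) (∏ i ∈ s, f i) := by
  classical
  induction s using Finset.induction_on with
  | empty =>
      simp only [Finset.sum_empty, Finset.prod_empty]
      exact ord_bot 1
  | insert _ _ hnotmem ih =>
      rename_i a s'
      rw [Finset.sum_insert hnotmem, Finset.prod_insert hnotmem]
      exact Ord.mul (h a (Finset.mem_insert_self a s'))
        (ih fun i hi => h i (Finset.mem_insert_of_mem hi))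

lemma ord_of_isHomogeneous {q : MvP} {e : ℕ} (h : q.IsHomogeneous e) : Ord e q := by
  intro u hu
  by_contra hne
  have := h hne
  rw [Pi.one_def, ← Finsupp.degree_eq_weight_one] at this
  omega

lemma ord_homogeneousComponent (e : ℕ) (q : MvP) :
    Ord e (homogeneousComponent e q) :=
  ord_of_isHomogeneous (homogeneousComponent_isHomogeneous e q)

/-- substitution `X 1 ↦ B` fixing the other variables -/
def phi (B : MvP) : MvP →ₐ[ℂ] MvP :=
  aeval (fun i => if i = 1 then B else X i)

lemma phi_X1 (B : MvP) : phi B (X 1) = B := by simp [phi]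

lemma phi_X_ne (B : MvP) {i : Fin 3} (h : i ≠ 1) : phi B (X i) = X i := by
  simp [phi, h]

lemma phi_C (B : MvP) (a : ℂ) : phi B (C a) = C a := by
  simp [phi, algHom_C]

lemma ord_phi {B : MvP} (hB : Ord 1 B) {t : ℕ} {q : MvP} (h : Ord t q) :
    Ord t (phi B q) := by
  classical
  rw [q.as_sum, map_sum]
  apply Ord.sum
  intro v hv
  have hvt : t ≤ v.degree := by
    by_contra hlt
    push_neg at hlt
    exact (mem_support_iff.mp hv) (h v hlt)
  apply Ord.mono hvt
  have : phi B ((monomial v) (coeff v q))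
      = C (coeff v q) * ∏ i ∈ v.support, (if i = 1 then B else X i) ^ v i := by
    simp only [phi, aeval_monomial, algebraMap_eq]
    rfl
  rw [this]
  apply Ord.C_mul
  have hdeg : v.degree = ∑ i ∈ v.support, v i := rfl
  rw [hdeg]
  apply Ord.prod
  intro i _
  apply Ord.pow
  split_ifs with hi
  · exact hB
  · exact ord_X i

lemma coeff_psi (q : MvP) (u : Fin 3 →₀ ℕ) :
    coeff u (phi 0 q) = if u 1 = 0 then coeff u q else 0 := by
  classical
  induction q using MvPolynomial.induction_on generalizing u with
  | C a =>
      rw [phi_C]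
      by_cases hu : u 1 = 0
      · rw [if_pos hu]
      · rw [if_neg hu, coeff_C, if_neg]
        intro h0
        apply hu
        rw [← h0]
        rfl
  | add p q hp hq =>
      rw [map_add, coeff_add, hp u, hq u, coeff_add]
      split_ifs
      · rfl
      · rw [add_zero]
  | mul_X p i hp =>
      rw [map_mul]
      by_cases hi : i = 1
      · subst hi
        rw [phi_X1, mul_zero, coeff_zero]
        by_cases hu : u 1 = 0
        · rw [if_pos hu, coeff_mul_X', if_neg, eq_comm]
          simpa using hu
        · rw [if_neg hu]
      · rw [phi_X_ne 0 hi, coeff_mul_X', coeff_mul_X']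
        have hsub : (u - Finsupp.single i 1 : Fin 3 →₀ ℕ) 1 = u 1 := by
          rw [Finsupp.tsub_apply, Finsupp.single_eq_of_ne (Ne.symm hi), Nat.sub_zero]
        by_cases hmem : i ∈ u.support
        · rw [if_pos hmem, if_pos hmem, hp, hsub]
        · rw [if_neg hmem, if_neg hmem]
          split_ifs <;> rfl

lemma psi_decomp (q : MvP) : ∃ t : MvP, q = phi 0 q + X 1 * t := by
  classical
  induction q using MvPolynomial.induction_on with
  | C a => exact ⟨0, by rw [phi_C, mul_zero, add_zero]⟩
  | add p q hp hq =>
      obtain ⟨t1, h1⟩ := hp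
      obtain ⟨t2, h2⟩ := hq
      exact ⟨t1 + t2, by rw [map_add]; nth_rewrite 1 [h1, h2]; ring⟩
  | mul_X p i hp =>
      obtain ⟨t, ht⟩ := hp
      by_cases hi : i = 1
      · subst hi
        refine ⟨phi 0 p + t * X 1, ?_⟩
        rw [map_mul, phi_X1, mul_zero]
        nth_rewrite 1 [ht]; ring
      · refine ⟨t * X i, ?_⟩
        rw [map_mul, phi_X_ne 0 hi]
        nth_rewrite 1 [ht]; ring

lemma phi_psi (B : MvP) (q : MvP) : phi B (phi 0 q) = phi 0 q := by
  induction q using MvPolynomial.induction_on with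
  | C a => rw [phi_C, phi_C]
  | add p q hp hq => rw [map_add, map_add, hp, hq]
  | mul_X p i hp =>
      rw [map_mul]
      by_cases hi : i = 1
      · subst hi
        simp only [map_mul, phi_X1, mul_zero, map_zero]
      · rw [phi_X_ne 0 hi, map_mul, hp, phi_X_ne B hi]

lemma psi_isHomogeneous {q : MvP} {e : ℕ} (hq : q.IsHomogeneous e) :
    (phi 0 q).IsHomogeneous e := by
  intro u hu
  rw [coeff_psi] at hu
  by_cases h1 : u 1 = 0
  · rw [if_pos h1] at hu
    exact hq hu
  · rw [if_neg h1] at hu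
    exact absurd rfl hu

lemma key_K {B : MvP} (hB : Ord 2 B) {q : MvP} {e : ℕ} (hq : q.IsHomogeneous e) :
    homogeneousComponent e (phi B q) = phi 0 q := by
  obtain ⟨t, ht⟩ := psi_decomp q
  have htord : Ord (e - 1) t := by
    intro u hu
    rcases Nat.eq_zero_or_pos e with he | he
    · omega
    have hc : coeff u t = coeff (Finsupp.single 1 1 + u) (X 1 * t) :=
      (coeff_X_mul _ _ _).symm
    have hxt : X 1 * t = q - phi 0 q := by linear_combination -ht
    rw [hc, hxt, coeff_sub, coeff_psi, if_neg, sub_zero]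
    · by_contra hne
      have hh := hq hne
      rw [Pi.one_def, ← Finsupp.degree_eq_weight_one, dg_add, dg_single] at hh
      omega
    · simp [Finsupp.single_eq_same]
  have h2 : phi B q = phi 0 q + B * phi B t := by
    nth_rewrite 1 [ht]
    rw [map_add, map_mul, phi_psi, phi_X1]
  rw [h2, map_add]
  have h3 : homogeneousComponent e (phi 0 q) = phi 0 q := by
    have := homogeneousComponent_of_mem
      ((mem_homogeneousSubmodule _ _).mpr (psi_isHomogeneous hq)) (m := e)
    rw [this, if_pos rfl]
  have h4 : homogeneousComponent e (B * phi B t) = 0 := by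
    have hord : Ord (2 + (e - 1)) (B * phi B t) :=
      Ord.mul hB (ord_phi (hB.mono (by omega)) htord)
    exact ord_iff.mp hord e (by omega)
  rw [h3, h4, add_zero]

lemma stepC {G h w : MvP} {d : ℕ} (hG : G.IsHomogeneous 2) (hG0 : G ≠ 0)
    (hh : Ord 3 h) (hord : Ord d (w * (G + h))) : Ord (d - 2) w := by
  have hGh : Ord 2 (G + h) := (ord_of_isHomogeneous hG).add (hh.mono (by omega))
  suffices H : ∀ a, a + 2 ≤ d → Ord a w by
    rcases le_or_gt d 2 with hd | hd
    · have : d - 2 = 0 := by omega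
      rw [this]; exact ord_bot w
    · exact H (d - 2) (by omega)
  intro a ha
  induction a with
  | zero => exact ord_bot w
  | succ a ih =>
    have iha := ih (by omega)
    have hW : homogeneousComponent a w = 0 := by
      set W := homogeneousComponent a w with hWdef
      have hw' : Ord (a + 1) (w - W) := by
        intro u hu
        rw [coeff_sub, hWdef, coeff_homogeneousComponent]
        rcases eq_or_ne u.degree a with hda | hda
        · rw [if_pos hda, sub_self]
        · rw [if_neg hda, sub_zero]
          exact iha u (by omega)
      have hWord : Ord a W := ord_homogeneousComponent a w
      have hcomp2 : homogeneousComponent (a + 2) (w * (G + h)) = 0 :=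
        ord_iff.mp hord _ (by omega)
      have hsplit : w * (G + h) = W * G + (W * h + (w - W) * (G + h)) := by ring
      rw [hsplit, map_add, map_add] at hcomp2
      have h1 : homogeneousComponent (a + 2) (W * h) = 0 :=
        ord_iff.mp (hWord.mul hh) _ (by omega)
      have h2 : homogeneousComponent (a + 2) ((w - W) * (G + h)) = 0 :=
        ord_iff.mp (hw'.mul hGh) _ (by omega)
      have h3 : homogeneousComponent (a + 2) (W * G) = W * G := by
        have := homogeneousComponent_of_mem
          ((mem_homogeneousSubmodule _ _).mpr
            ((homogeneousComponent_isHomogeneous a w).mul hG)) (m := a + 2)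
        rw [this, if_pos rfl]
      rw [h1, h2, h3, add_zero, add_zero] at hcomp2
      exact (mul_eq_zero.mp hcomp2).resolve_right hG0
    intro u hu
    rcases eq_or_ne u.degree a with hda | hda
    · have : coeff u w = coeff u (homogeneousComponent a w) := by
        rw [coeff_homogeneousComponent, if_pos hda]
      rw [this, hW, coeff_zero]
    · exact iha u (by omega)

lemma stepD {G h w : MvP} {d : ℕ} (hd2 : 2 ≤ d) (hG : G.IsHomogeneous 2)
    (hh : Ord 3 h) (hw : Ord (d - 2) w) :
    homogeneousComponent d (w * (G + h)) = homogeneousComponent (d - 2) w * G := by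
  set W := homogeneousComponent (d - 2) w with hWdef
  have hw' : Ord (d - 1) (w - W) := by
    intro u hu
    rw [coeff_sub, hWdef, coeff_homogeneousComponent]
    rcases eq_or_ne u.degree (d - 2) with hda | hda
    · rw [if_pos hda, sub_self]
    · rw [if_neg hda, sub_zero]
      exact hw u (by omega)
  have hWord : Ord (d - 2) W := ord_homogeneousComponent _ w
  have hGh : Ord 2 (G + h) := (ord_of_isHomogeneous hG).add (hh.mono (by omega))
  have hsplit : w * (G + h) = W * G + (W * h + (w - W) * (G + h)) := by ring
  rw [hsplit, map_add, map_add]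
  have h1 : homogeneousComponent d (W * h) = 0 :=
    ord_iff.mp (hWord.mul hh) _ (by omega)
  have h2 : homogeneousComponent d ((w - W) * (G + h)) = 0 :=
    ord_iff.mp (hw'.mul hGh) _ (by omega)
  have h3 : homogeneousComponent d (W * G) = W * G := by
    have := homogeneousComponent_of_mem
      ((mem_homogeneousSubmodule _ _).mpr
        ((homogeneousComponent_isHomogeneous (d - 2) w).mul hG)) (m := d)
    rw [this, if_pos (by omega)]
  rw [h1, h2, h3, add_zero, add_zero]

end

end TangentConeAux


open TangentConeAux in
theorem tangent_cone_ideal_of_node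
    (m n : ℕ) (hm : 2 ≤ m) (hn : 2 ≤ n)
    (b c : ℕ → ℂ) (hc2 : c 2 ≠ 0)
    (g₁ g₂ : MvPolynomial (Fin 3) ℂ)
    (hg₁ : g₁ = X 1 - ∑ i ∈ Finset.Icc 2 m, C (b i) * X 0 ^ i)
    (hg₂ : g₂ = X 2 ^ 2 + ∑ i ∈ Finset.Icc 2 n, C (c i) * X 0 ^ i)
    (I : Ideal (MvPolynomial (Fin 3) ℂ)) (hI : I = Ideal.span {g₁, g₂})
    (J : Ideal (MvPolynomial (Fin 3) ℂ))
    (hJ : J = Ideal.span {X 1, X 2 ^ 2 + C (c 2) * X 0 ^ 2}) :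
    ∀ p ∈ I, ∀ d : ℕ,
      (∀ e < d, homogeneousComponent e p = 0) →
      homogeneousComponent d p ∈ J := by
  classical
  intro p hp d hcomp
  -- the two distinguished homogeneous forms
  set G : MvP := X 2 ^ 2 + C (c 2) * X 0 ^ 2 with hGdef
  set B : MvP := ∑ i ∈ Finset.Icc 2 m, C (b i) * X 0 ^ i with hBdef
  set h : MvP := ∑ i ∈ Finset.Icc 3 n, C (c i) * X 0 ^ i with hhdef
  have hGhom : G.IsHomogeneous 2 :=
    (isHomogeneous_X_pow 2 2).add (isHomogeneous_C_mul_X_pow (c 2) 0 2)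
  have hG0 : G ≠ 0 := by
    intro h0
    have hcoeff : coeff (Finsupp.single 0 2) G = c 2 := by
      rw [hGdef, coeff_add, coeff_C_mul, coeff_X_pow, coeff_X_pow,
        if_pos rfl, if_neg, mul_one, zero_add]
      intro heq
      rcases (Finsupp.single_eq_single_iff _ _ _ _).mp heq with ⟨h1, -⟩ | ⟨-, h1⟩
      · exact absurd h1 (by decide)
      · exact absurd h1 (by decide)
    rw [h0, coeff_zero] at hcoeff
    exact hc2 hcoeff.symm
  have hBord : Ord 2 B := by
    apply Ord.sum
    intro i hi
    exact Ord.mono (Finset.mem_Icc.mp hi).1 (Ord.C_mul _ (ord_X_pow 0 i))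
  have hhord : Ord 3 h := by
    apply Ord.sum
    intro i hi
    exact Ord.mono (Finset.mem_Icc.mp hi).1 (Ord.C_mul _ (ord_X_pow 0 i))
  have hg₂split : g₂ = G + h := by
    rw [hg₂, hGdef, hhdef]
    have h2mem : 2 ∈ Finset.Icc 2 n := Finset.mem_Icc.mpr ⟨le_refl 2, hn⟩
    have herase : (Finset.Icc 2 n).erase 2 = Finset.Icc 3 n := by
      rw [Finset.Icc_erase_left]
      exact (Finset.Icc_add_one_left_eq_Ioc 2 n).symm
    rw [← Finset.add_sum_erase _ _ h2mem, herase]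
    ring
  -- ideal membership of the two generators of J
  have hX1J : (X 1 : MvP) ∈ J := by
    rw [hJ]
    exact Ideal.subset_span (Set.mem_insert _ _)
  have hGJ : G ∈ J := by
    rw [hJ]
    exact Ideal.subset_span (Set.mem_insert_of_mem _ rfl)
  -- decompose p and apply the substitution φ
  obtain ⟨q₁, q₂, hpq⟩ := Ideal.mem_span_pair.mp (hI ▸ hp)
  have hφg₁ : phi B g₁ = 0 := by
    rw [hg₁, map_sub, map_sum, phi_X1]
    have : ∀ i ∈ Finset.Icc 2 m, phi B (C (b i) * X 0 ^ i) = C (b i) * X 0 ^ i := by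
      intro i _
      rw [map_mul, map_pow, phi_C, phi_X_ne B (by decide)]
    rw [Finset.sum_congr rfl this, ← hBdef, sub_self]
  have hφg₂ : phi B g₂ = g₂ := by
    rw [hg₂, map_add, map_pow, map_sum, phi_X_ne B (by decide)]
    have : ∀ i ∈ Finset.Icc 2 n, phi B (C (c i) * X 0 ^ i) = C (c i) * X 0 ^ i := by
      intro i _
      rw [map_mul, map_pow, phi_C, phi_X_ne B (by decide)]
    rw [Finset.sum_congr rfl this]
  have hφp : phi B p = phi B q₂ * g₂ := by
    rw [← hpq, map_add, map_mul, map_mul, hφg₁, hφg₂, mul_zero, zero_add]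
  set w : MvP := phi B q₂ with hwdef
  have hordp : Ord d p := ord_iff.mpr hcomp
  have hordφp : Ord d (w * (G + h)) := by
    rw [← hg₂split, ← hφp]
    exact ord_phi (hBord.mono (by omega)) hordp
  have hordw : Ord (d - 2) w := stepC hGhom hG0 hhord hordφp
  -- the key identity : homogeneousComponent d (φ p) = ψ (homogeneousComponent d p)
  have hK : homogeneousComponent d (phi B p) = phi 0 (homogeneousComponent d p) := by
    conv_lhs => rw [← sum_homogeneousComponent p, map_sum, map_sum]
    rw [Finset.sum_eq_single d]
    · exact key_K hBord (homogeneousComponent_isHomogeneous d p)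
    · intro e he hne
      rcases lt_or_gt_of_ne hne with hlt | hgt
      · rw [hcomp e hlt, map_zero, map_zero]
      · exact ord_iff.mp
          (ord_phi (hBord.mono (by omega)) (ord_homogeneousComponent e p)) d hgt
    · intro hd
      have : p.totalDegree < d := by
        by_contra hcon
        exact hd (Finset.mem_range.mpr (by omega))
      rw [homogeneousComponent_eq_zero _ _ this, map_zero, map_zero]
  -- ψ (homogeneousComponent d p) lies in J
  have hψJ : phi 0 (homogeneousComponent d p) ∈ J := by
    rw [← hK, hφp, hg₂split]
    rcases le_or_gt 2 d with hd2 | hd2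
    · rw [stepD hd2 hGhom hhord hordw]
      exact Ideal.mul_mem_left J _ hGJ
    · have : Ord 2 (w * (G + h)) := by
        have := Ord.mul (ord_bot w) ((ord_of_isHomogeneous hGhom).add (hhord.mono (by omega)))
        simpa using this
      rw [ord_iff.mp this d hd2]
      exact J.zero_mem
  obtain ⟨t, ht⟩ := psi_decomp (homogeneousComponent d p)
  rw [ht]
  exact J.add_mem hψJ (Ideal.mul_mem_right t J hX1J)
end

section
/- In ℂ[x, y, z], set F = x³ + y³ + z³, and define D_H = x·y·F and D₆ = (z−2y)²·y·F + (z−2x)²·x·F + (x−y)²·(x−2y)²·x·y. Then D_H and D₆ are relatively prime: every common divisor of D_H and D₆ in ℂ[x, y, z] is a unit. (In particular the plane curves {D_H = 0} and {D₆ = 0} have no common component.) -/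
open MvPolynomial

noncomputable def linAux (c : ℂ) :
    MvPolynomial (Fin 3) ℂ →ₐ[ℂ] MvPolynomial (Fin 3) ℂ :=
  aeval ![X 0 - C c * X 1, X 1, X 2]

noncomputable def linAux' (c : ℂ) :
    MvPolynomial (Fin 3) ℂ →ₐ[ℂ] MvPolynomial (Fin 3) ℂ :=
  aeval ![X 0 + C c * X 1, X 1, X 2]

noncomputable def linEquiv (c : ℂ) :
    MvPolynomial (Fin 3) ℂ ≃ₐ[ℂ] MvPolynomial (Fin 3) ℂ :=
  AlgEquiv.ofAlgHom (linAux c) (linAux' c)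
    (by
      apply MvPolynomial.algHom_ext
      intro i
      fin_cases i <;> simp [linAux, linAux'] <;> ring)
    (by
      apply MvPolynomial.algHom_ext
      intro i
      fin_cases i <;> simp [linAux, linAux'] <;> ring)

lemma prime_of_algEquiv (e : MvPolynomial (Fin 3) ℂ ≃ₐ[ℂ] MvPolynomial (Fin 3) ℂ)
    {p : MvPolynomial (Fin 3) ℂ} (h : e (X 0) = p) (hp : Prime (X 0 : MvPolynomial (Fin 3) ℂ)) :
    Prime p := by
  have h2 := MulEquiv.prime_iff e.toMulEquiv (p := (X 0 : MvPolynomial (Fin 3) ℂ))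
  have h3 : e.toMulEquiv (X 0) = p := h
  rw [h3] at h2
  exact h2.mpr hp

lemma prime_X0 : Prime (X 0 : MvPolynomial (Fin 3) ℂ) := by
  have h := MulEquiv.prime_iff (MvPolynomial.finSuccEquiv ℂ 2).toMulEquiv
    (p := (X 0 : MvPolynomial (Fin 3) ℂ))
  have h3 : (MvPolynomial.finSuccEquiv ℂ 2).toMulEquiv (X 0) = Polynomial.X :=
    MvPolynomial.finSuccEquiv_X_zero
  rw [h3] at h
  exact h.mp Polynomial.prime_X

lemma prime_X1 : Prime (X 1 : MvPolynomial (Fin 3) ℂ) :=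
  prime_of_algEquiv (MvPolynomial.renameEquiv ℂ (Equiv.swap (0 : Fin 3) 1))
    (by simp [renameEquiv]) prime_X0

lemma prime_lin (c : ℂ) : Prime (X 0 - C c * X 1 : MvPolynomial (Fin 3) ℂ) :=
  prime_of_algEquiv (linEquiv c) (by simp [linEquiv, linAux]) prime_X0

lemma not_dvd_of_eval {p q : MvPolynomial (Fin 3) ℂ} (c : Fin 3 → ℂ)
    (hp : eval c p = 0) (hq : eval c q ≠ 0) : ¬ p ∣ q := by
  rintro ⟨r, rfl⟩
  exact hq (by rw [map_mul, hp, zero_mul])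

theorem discriminant_curves_rel_prime
    (F DH D6 : MvPolynomial (Fin 3) ℂ)
    (hF : F = X 0 ^ 3 + X 1 ^ 3 + X 2 ^ 3)
    (hDH : DH = X 0 * X 1 * F)
    (hD6 : D6 = (X 2 - 2 * X 1) ^ 2 * X 1 * F + (X 2 - 2 * X 0) ^ 2 * X 0 * F +
      (X 0 - X 1) ^ 2 * (X 0 - 2 * X 1) ^ 2 * X 0 * X 1) :
    IsRelPrime DH D6 := by
  -- linear forms
  have hC1 : (C (1:ℂ) : MvPolynomial (Fin 3) ℂ) = 1 := by simp
  have hC2 : (C (2:ℂ) : MvPolynomial (Fin 3) ℂ) = 2 := by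
    simp [map_ofNat]
  have prime_sub1 : Prime (X 0 - X 1 : MvPolynomial (Fin 3) ℂ) := by
    have := prime_lin 1; rwa [hC1, one_mul] at this
  have prime_sub2 : Prime (X 0 - 2 * X 1 : MvPolynomial (Fin 3) ℂ) := by
    have := prime_lin 2; rwa [hC2] at this
  -- non-divisibility facts via evaluation
  have hX0F : ¬ (X 0 : MvPolynomial (Fin 3) ℂ) ∣ F := by
    apply not_dvd_of_eval ![0, 1, 0] <;> simp [hF]
  have hX1F : ¬ (X 1 : MvPolynomial (Fin 3) ℂ) ∣ F := by
    apply not_dvd_of_eval ![1, 0, 0] <;> simp [hF]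
  have hs1F : ¬ (X 0 - X 1 : MvPolynomial (Fin 3) ℂ) ∣ F := by
    apply not_dvd_of_eval ![1, 1, 0] <;> simp [hF] <;> norm_num
  have hs2F : ¬ (X 0 - 2 * X 1 : MvPolynomial (Fin 3) ℂ) ∣ F := by
    apply not_dvd_of_eval ![2, 1, 0] <;> simp [hF] <;> norm_num
  have hX0D6 : ¬ (X 0 : MvPolynomial (Fin 3) ℂ) ∣ D6 := by
    apply not_dvd_of_eval ![0, 1, 0] <;> simp [hD6, hF] <;> norm_num
  have hX1D6 : ¬ (X 1 : MvPolynomial (Fin 3) ℂ) ∣ D6 := by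
    apply not_dvd_of_eval ![1, 0, 0] <;> simp [hD6, hF] <;> norm_num
  -- rel primality of F with the remainder polynomial G
  set G : MvPolynomial (Fin 3) ℂ :=
    (X 0 - X 1) ^ 2 * (X 0 - 2 * X 1) ^ 2 * X 0 * X 1 with hG
  have hFG : IsRelPrime F G := by
    have h1 : IsRelPrime ((X 0 - X 1 : MvPolynomial (Fin 3) ℂ) ^ 2) F :=
      (prime_sub1.irreducible.isRelPrime_iff_not_dvd.mpr hs1F).pow_left
    have h2 : IsRelPrime ((X 0 - 2 * X 1 : MvPolynomial (Fin 3) ℂ) ^ 2) F :=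
      (prime_sub2.irreducible.isRelPrime_iff_not_dvd.mpr hs2F).pow_left
    have h3 : IsRelPrime (X 0 : MvPolynomial (Fin 3) ℂ) F :=
      prime_X0.irreducible.isRelPrime_iff_not_dvd.mpr hX0F
    have h4 : IsRelPrime (X 1 : MvPolynomial (Fin 3) ℂ) F :=
      prime_X1.irreducible.isRelPrime_iff_not_dvd.mpr hX1F
    exact (((h1.mul_left h2).mul_left h3).mul_left h4).symm
  have hFD6 : IsRelPrime F D6 := by
    intro d hdF hdD6
    apply hFG hdF
    have hQ : G = D6 - ((X 2 - 2 * X 1) ^ 2 * X 1 + (X 2 - 2 * X 0) ^ 2 * X 0) * F := by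
      rw [hD6, hG]; ring
    rw [hQ]
    exact dvd_sub hdD6 (Dvd.dvd.mul_left hdF _)
  have hX0D6' : IsRelPrime (X 0 : MvPolynomial (Fin 3) ℂ) D6 :=
    prime_X0.irreducible.isRelPrime_iff_not_dvd.mpr hX0D6
  have hX1D6' : IsRelPrime (X 1 : MvPolynomial (Fin 3) ℂ) D6 :=
    prime_X1.irreducible.isRelPrime_iff_not_dvd.mpr hX1D6
  rw [hDH]
  exact (hX0D6'.mul_left hX1D6').mul_left hFD6
end
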